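/- Let X, Y be finite sets, P_X a pmf with positive entries, d : X × Y → [0,∞), ν ≥ 0, and p̂_{Y|X} a conditional pmf with positive entries. Then lim_{ρ→0} (1/ρ) A_s^{(ρ,ν)}(p̂_{Y|X}|P_X) = I(P_X, p̂_{Y|X}) + ν E_{(P_X, p̂_{Y|X})}[d(X,Y)], where A_s^{(ρ,ν)}(p̂_{Y|X}|P_X) = (1+ρ) log Σ_y [ Σ_x P_X(x) e^{ρν d(x,y)} p̂_{Y|X}(y|x)^{1+ρ} ]^{1/(1+ρ)} and I(P_X, p̂_{Y|X}) is the mutual information of the joint distribution P_X(x)p̂_{Y|X}(y|x). -/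

import Mathlib

open Finset Real

theorem stmt_18 {X Y : Type*} [Fintype X] [Fintype Y]
    (P : X → ℝ) (hP0 : ∀ x, 0 < P x) (hP1 : ∑ x, P x = 1)
    (d : X → Y → ℝ) (hd0 : ∀ x y, 0 ≤ d x y) (nu : ℝ) (hnu : 0 ≤ nu)
    (k : X → Y → ℝ) (hk0 : ∀ x y, 0 < k x y) (hk1 : ∀ x, ∑ y, k x y = 1) :
    Filter.Tendsto
      (fun rho : ℝ => (1 / rho) * ((1 + rho) * Real.log (∑ y,
        (∑ x, P x * Real.exp (rho * nu * d x y) * (k x y) ^ (1 + rho)) ^ ((1 : ℝ) / (1 + rho)))))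
      (nhdsWithin 0 (Set.Ioi (-1 : ℝ) \ {0}))
      (nhds ((∑ x, ∑ y, P x * k x y * Real.log (k x y / ∑ x', P x' * k x' y)) +
        nu * ∑ x, ∑ y, P x * k x y * d x y)) := by
  have hXne : Nonempty X := by
    by_contra h
    rw [not_nonempty_iff] at h
    rw [Finset.univ_eq_empty, Finset.sum_empty] at hP1
    norm_num at hP1
  set Q : Y → ℝ := fun y => ∑ x, P x * k x y with hQdef
  have hQpos : ∀ y, 0 < Q y :=
    fun y => Finset.sum_pos (fun x _ => mul_pos (hP0 x) (hk0 x y)) Finset.univ_nonempty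
  have hQ1 : ∑ y, Q y = 1 := by
    rw [Finset.sum_comm]
    simp_rw [← Finset.mul_sum, hk1, mul_one]
    exact hP1
  set g : Y → ℝ := fun y => ∑ x, P x * k x y * (nu * d x y + Real.log (k x y)) with hgdef
  set F : ℝ → ℝ := fun rho => (1 + rho) * Real.log (∑ y,
      (∑ x, P x * Real.exp (rho * nu * d x y) * (k x y) ^ (1 + rho)) ^ ((1 : ℝ) / (1 + rho)))
    with hFdef
  -- derivative of each inner sum
  have hG : ∀ y, HasDerivAt
      (fun rho : ℝ => ∑ x, P x * Real.exp (rho * nu * d x y) * (k x y) ^ (1 + rho)) (g y) 0 := by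
    intro y
    apply HasDerivAt.fun_sum
    intro x _
    have he : HasDerivAt (fun rho : ℝ => Real.exp (rho * nu * d x y)) (nu * d x y) 0 := by
      have h1 : HasDerivAt (fun rho : ℝ => rho * nu * d x y) (nu * d x y) 0 := by
        simpa using ((hasDerivAt_id (0:ℝ)).mul_const nu).mul_const (d x y)
      simpa using h1.exp
    have hr : HasDerivAt (fun rho : ℝ => (k x y) ^ (1 + rho)) (k x y * Real.log (k x y)) 0 := by
      have := (hasDerivAt_const (0:ℝ) (k x y)).rpow
        ((hasDerivAt_const (0:ℝ) (1:ℝ)).add (hasDerivAt_id 0)) (hk0 x y)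
      simpa [Real.rpow_one] using this
    have := (he.const_mul (P x)).fun_mul hr
    refine this.congr_deriv ?_
    simp [Real.rpow_one]
    ring
  have hG0 : ∀ y, (∑ x, P x * Real.exp ((0:ℝ) * nu * d x y) * (k x y) ^ (1 + (0:ℝ))) = Q y := by
    intro y
    simp [Real.rpow_one, Q]
  -- derivative of each rpow term
  have hu : HasDerivAt (fun rho : ℝ => (1 : ℝ) / (1 + rho)) (-1) 0 := by
    have h1 : HasDerivAt (fun rho : ℝ => 1 + rho) 1 0 := by
      simpa using (hasDerivAt_id (0:ℝ)).const_add 1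
    have := h1.fun_inv (by norm_num)
    simp only [one_div]
    refine this.congr_deriv ?_
    norm_num
  have hT : ∀ y, HasDerivAt
      (fun rho : ℝ => (∑ x, P x * Real.exp (rho * nu * d x y) * (k x y) ^ (1 + rho))
        ^ ((1 : ℝ) / (1 + rho)))
      (g y - Q y * Real.log (Q y)) 0 := by
    intro y
    have hpos : (0:ℝ) < (fun rho : ℝ =>
        ∑ x, P x * Real.exp (rho * nu * d x y) * (k x y) ^ (1 + rho)) 0 := by
      simp only [hG0 y]; exact hQpos y
    have := (hG y).rpow hu hpos
    simp only [hG0 y] at this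
    convert this using 1
    norm_num [Real.rpow_one]
    ring
  -- derivative of the outer sum
  have hS : HasDerivAt
      (fun rho : ℝ => ∑ y, (∑ x, P x * Real.exp (rho * nu * d x y) * (k x y) ^ (1 + rho))
        ^ ((1 : ℝ) / (1 + rho)))
      (∑ y, (g y - Q y * Real.log (Q y))) 0 :=
    HasDerivAt.fun_sum (fun y _ => hT y)
  have hS0 : (∑ y, (∑ x, P x * Real.exp ((0:ℝ) * nu * d x y) * (k x y) ^ (1 + (0:ℝ)))
      ^ ((1 : ℝ) / (1 + (0:ℝ)))) = 1 := by
    rw [show (∑ y, (∑ x, P x * Real.exp ((0:ℝ) * nu * d x y) * (k x y) ^ (1 + (0:ℝ)))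
        ^ ((1 : ℝ) / (1 + (0:ℝ)))) = ∑ y, Q y from Finset.sum_congr rfl fun y _ => by
      simp [Real.rpow_one, Q]]
    exact hQ1
  -- derivative of F
  have hF : HasDerivAt F (∑ y, (g y - Q y * Real.log (Q y))) 0 := by
    have h1 : HasDerivAt (fun rho : ℝ => 1 + rho) 1 0 := by
      simpa using (hasDerivAt_id (0:ℝ)).const_add 1
    have hlog := hS.log (by simp only [hS0]; norm_num)
    have := h1.fun_mul hlog
    rw [hFdef]
    refine this.congr_deriv ?_
    simp only [hS0]
    simp
  have hF0 : F 0 = 0 := by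
    rw [hFdef]
    simp only [hS0]
    simp
  -- identify the derivative value
  have hL : (∑ y, (g y - Q y * Real.log (Q y)))
      = (∑ x, ∑ y, P x * k x y * Real.log (k x y / Q y))
        + nu * ∑ x, ∑ y, P x * k x y * d x y := by
    rw [Finset.mul_sum, ← Finset.sum_add_distrib]
    simp_rw [Finset.mul_sum, ← Finset.sum_add_distrib]
    rw [Finset.sum_comm]
    refine Finset.sum_congr rfl fun y _ => ?_
    rw [hgdef]
    simp only
    rw [show Q y * Real.log (Q y) = ∑ x, P x * k x y * Real.log (Q y) from Finset.sum_mul .., ←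
      Finset.sum_sub_distrib]
    refine Finset.sum_congr rfl fun x _ => ?_
    rw [Real.log_div (hk0 x y).ne' (hQpos y).ne']
    ring
  rw [← hL]
  -- conclude via the slope characterization of the derivative
  rw [hasDerivAt_iff_tendsto_slope] at hF
  have hsub : Set.Ioi (-1 : ℝ) \ {0} ⊆ {(0:ℝ)}ᶜ := fun ρ h => h.2
  refine (hF.mono_left (nhdsWithin_mono _ hsub)).congr fun rho => ?_
  rw [slope_def_field, hF0]
  field_simp [hFdef]
  simp [F]
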